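/- (Identifiability.) In the asymmetric power-transformed GARCH(1,1) model, under assumption A1, if θ ∈ Θ0 then v_t(ϑ) = 1 almost surely if and only if ϑ = ϑ0. -/

import Mathlib

open MeasureTheory ProbabilityTheory Filter Topology Real Matrix

noncomputable section

namespace NonstatGARCH

variable {Ω : Type*} [MeasurableSpace Ω]

/-- Convergence in distribution (weak convergence of the laws) of a sequence of real
random variables towards a probability law `ν` on `ℝ`. -/
def TendstoInDistrib (μ : Measure Ω) (X : ℕ → Ω → ℝ) (ν : Measure ℝ) : Prop :=
  ∀ f : BoundedContinuousFunction ℝ ℝ,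
    Tendsto (fun n => ∫ x, f (X n x) ∂μ) atTop (𝓝 (∫ y, f y ∂ν))

/-- Convergence in probability to a constant. -/
def TendstoInProb (μ : Measure Ω) (X : ℕ → Ω → ℝ) (c : ℝ) : Prop :=
  ∀ e : ℝ, 0 < e → Tendsto (fun n => μ {x | e ≤ |X n x - c|}) atTop (𝓝 0)

/-- The function a₀(x) = α₊ (x⁺)^δ + α₋ (−x⁻)^δ + β. -/
def a0 (δ αp αm β : ℝ) (y : ℝ) : ℝ :=
  αp * (max y 0) ^ δ + αm * (max (-y) 0) ^ δ + β

/-- A point `v` belongs to the support of the law of `Z`. -/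
def InSupport (μ : Measure Ω) (Z : Ω → ℝ) (v : ℝ) : Prop :=
  ∀ e : ℝ, 0 < e → 0 < μ {x | |Z x - v| < e}

/-- Assumption A1: the support of the noise contains at least three points and is not
concentrated on the positive or the negative half-line. -/
def A1 (μ : Measure Ω) (Z : Ω → ℝ) : Prop :=
  (∃ x1 x2 x3 : ℝ, x1 ≠ x2 ∧ x1 ≠ x3 ∧ x2 ≠ x3 ∧
      InSupport μ Z x1 ∧ InSupport μ Z x2 ∧ InSupport μ Z x3) ∧
    μ {x | 0 ≤ Z x} < 1 ∧ μ {x | Z x ≤ 0} < 1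

/-- Assumption A2 : E{1+∑_{i=1}^{t-1} a₀(η₁)⋯a₀(η_i)}⁻¹ = o(1/√t). -/
def A2 (μ : Measure Ω) (δ αp0 αm0 β0 : ℝ) (η : ℤ → Ω → ℝ) : Prop :=
  Tendsto (fun t : ℕ => Real.sqrt t *
      ∫ x, (1 + ∑ i ∈ Finset.Icc 1 (t - 1),
        ∏ k ∈ Finset.Icc 1 i, a0 δ αp0 αm0 β0 (η (k : ℤ) x))⁻¹ ∂μ)
    atTop (𝓝 0)

/-- The asymmetric power-transformed GARCH(1,1) model with parameter
`θp = (ω, α₊, α₋, β)` (as a vector of `Fin 4 → ℝ`), power `δ`, i.i.d. noise `η`,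
observations `ε` and volatility process `h`. -/
structure Model (μ : Measure Ω) (δ : ℝ) (θp : Fin 4 → ℝ) (η : ℤ → Ω → ℝ)
    (ε h : ℕ → Ω → ℝ) : Prop where
  measη : ∀ t, Measurable (η t)
  measε : ∀ t, Measurable (ε t)
  meash : ∀ t, Measurable (h t)
  indep : iIndepFun η μ
  ident : ∀ s t : ℤ, IdentDistrib (η s) (η t) μ μ
  varone : ∫ x, (η 1 x) ^ 2 ∂μ = 1
  nondeg : μ {x | (η 1 x) ^ 2 = 1} < 1
  h0nonneg : ∀ x, 0 ≤ h 0 x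
  hrec : ∀ (t : ℕ) (x : Ω), h (t + 1) x =
    θp 0 + θp 1 * (max (ε t x) 0) ^ δ + θp 2 * (max (-(ε t x)) 0) ^ δ + θp 3 * h t x
  epsdef : ∀ (t : ℕ) (x : Ω), 1 ≤ t → ε t x = (h t x) ^ (1 / δ) * η (t : ℤ) x

/-- Positivity constraints on the true parameter. -/
def ParamPos (θp : Fin 4 → ℝ) : Prop :=
  0 < θp 0 ∧ 0 ≤ θp 1 ∧ 0 ≤ θp 2 ∧ 0 ≤ θp 3

/-- The process σ_t^δ(θ) computed from the observations, with initial value `s0`. -/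
def sigmaD (δ : ℝ) (ε : ℕ → Ω → ℝ) (s0 : Ω → ℝ) (θ : Fin 4 → ℝ) : ℕ → Ω → ℝ
  | 0 => s0
  | t + 1 => fun x =>
      θ 0 + θ 1 * (max (ε t x) 0) ^ δ + θ 2 * (max (-(ε t x)) 0) ^ δ
        + θ 3 * sigmaD δ ε s0 θ t x

/-- σ_t(θ) = (σ_t^δ(θ))^{1/δ}. -/
def sigma (δ : ℝ) (ε : ℕ → Ω → ℝ) (s0 : Ω → ℝ) (θ : Fin 4 → ℝ) (t : ℕ) (x : Ω) : ℝ :=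
  (sigmaD δ ε s0 θ t x) ^ (1 / δ)

/-- The QML loss ℓ_t(θ) = ε_t²/σ_t²(θ) + log σ_t²(θ). -/
def loss (δ : ℝ) (ε : ℕ → Ω → ℝ) (s0 : Ω → ℝ) (θ : Fin 4 → ℝ) (t : ℕ) (x : Ω) : ℝ :=
  (ε t x) ^ 2 / (sigma δ ε s0 θ t x) ^ (2 : ℝ) + Real.log ((sigma δ ε s0 θ t x) ^ (2 : ℝ))

/-- `θhat` is a (measurable) QMLE sequence over the parameter set `Θ`. -/
def IsQMLE (δ : ℝ) (ε : ℕ → Ω → ℝ) (s0 : Ω → ℝ) (Θ : Set (Fin 4 → ℝ))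
    (θhat : ℕ → Ω → Fin 4 → ℝ) : Prop :=
  (∀ n, Measurable (θhat n)) ∧ (∀ n x, θhat n x ∈ Θ) ∧
    ∀ (n : ℕ) (x : Ω), ∀ θ ∈ Θ,
      (n : ℝ)⁻¹ * ∑ t ∈ Finset.Icc 1 n, loss δ ε s0 (θhat n x) t x ≤
        (n : ℝ)⁻¹ * ∑ t ∈ Finset.Icc 1 n, loss δ ε s0 θ t x

/-- Partial derivative of θ ↦ σ_t^δ(θ) in the direction of the i-th coordinate. -/
def gradSigmaD (δ : ℝ) (ε : ℕ → Ω → ℝ) (s0 : Ω → ℝ) (θ : Fin 4 → ℝ) (t : ℕ) (x : Ω)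
    (i : Fin 4) : ℝ :=
  fderiv ℝ (fun ϑ => sigmaD δ ε s0 ϑ t x) θ (Pi.single i 1)

/-- The stationary process d_t^{α₊}. -/
def dAp (δ αp0 αm0 β0 : ℝ) (η : ℤ → Ω → ℝ) (t : ℤ) (x : Ω) : ℝ :=
  ∑' j : ℕ, ((max (η (t - ((j : ℤ) + 1)) x) 0) ^ δ / a0 δ αp0 αm0 β0 (η (t - ((j : ℤ) + 1)) x)) *
      ∏ k ∈ Finset.range j, β0 / a0 δ αp0 αm0 β0 (η (t - ((k : ℤ) + 1)) x)

/-- The stationary process d_t^{α₋}. -/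
def dAm (δ αp0 αm0 β0 : ℝ) (η : ℤ → Ω → ℝ) (t : ℤ) (x : Ω) : ℝ :=
  ∑' j : ℕ, ((max (-(η (t - ((j : ℤ) + 1)) x)) 0) ^ δ / a0 δ αp0 αm0 β0 (η (t - ((j : ℤ) + 1)) x)) *
      ∏ k ∈ Finset.range j, β0 / a0 δ αp0 αm0 β0 (η (t - ((k : ℤ) + 1)) x)

/-- The stationary process d_t^{β}. -/
def dB (δ αp0 αm0 β0 : ℝ) (η : ℤ → Ω → ℝ) (t : ℤ) (x : Ω) : ℝ :=
  ∑' j : ℕ, (j : ℝ) *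
      ((αp0 * (max (η (t - ((j : ℤ) + 1)) x) 0) ^ δ + αm0 * (max (-(η (t - ((j : ℤ) + 1)) x)) 0) ^ δ)
        / (β0 * a0 δ αp0 αm0 β0 (η (t - ((j : ℤ) + 1)) x))) *
      ∏ k ∈ Finset.range j, β0 / a0 δ αp0 αm0 β0 (η (t - ((k : ℤ) + 1)) x)

/-- The vector d_t = (d_t^{α₊}, d_t^{α₋}, d_t^{β})'. -/
def dVec (δ αp0 αm0 β0 : ℝ) (η : ℤ → Ω → ℝ) (t : ℤ) (x : Ω) : Fin 3 → ℝ :=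
  ![dAp δ αp0 αm0 β0 η t x, dAm δ αp0 αm0 β0 η t x, dB δ αp0 αm0 β0 η t x]

/-- The matrix 𝓘 = (4/δ²) E(d₁ d₁'). -/
def Imat (μ : Measure Ω) (δ αp0 αm0 β0 : ℝ) (η : ℤ → Ω → ℝ) : Matrix (Fin 3) (Fin 3) ℝ :=
  Matrix.of fun i j =>
    (4 / δ ^ 2) * ∫ x, dVec δ αp0 αm0 β0 η 1 x i * dVec δ αp0 αm0 β0 η 1 x j ∂μ

/-- The stationary process v_t(ϑ). -/
def vProc (δ αp0 αm0 β0 : ℝ) (η : ℤ → Ω → ℝ) (ϑ : Fin 3 → ℝ) (t : ℤ) (x : Ω) : ℝ :=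
  ∑' j : ℕ,
    ((ϑ 0 * (max (η (t - ((j : ℤ) + 1)) x) 0) ^ δ + ϑ 1 * (max (-(η (t - ((j : ℤ) + 1)) x)) 0) ^ δ)
      / a0 δ αp0 αm0 β0 (η (t - ((j : ℤ) + 1)) x)) *
      ∏ k ∈ Finset.range j, ϑ 2 / a0 δ αp0 αm0 β0 (η (t - ((k : ℤ) + 1)) x)

/-- η_t(θ) = ε_t / σ_t(θ). -/
def etaT (δ : ℝ) (ε : ℕ → Ω → ℝ) (s0 : Ω → ℝ) (θ : Fin 4 → ℝ) (t : ℕ) (x : Ω) : ℝ :=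
  ε t x / sigma δ ε s0 θ t x

/-- The empirical estimator γ_n(θ) of the top Lyapunov exponent. -/
def gammaN (δ : ℝ) (ε : ℕ → Ω → ℝ) (s0 : Ω → ℝ) (θ : Fin 4 → ℝ) (n : ℕ) (x : Ω) : ℝ :=
  (n : ℝ)⁻¹ * ∑ t ∈ Finset.Icc 1 n,
    Real.log (θ 1 * (max (etaT δ ε s0 θ t x) 0) ^ δ + θ 2 * (max (-(etaT δ ε s0 θ t x)) 0) ^ δ + θ 3)

/-- Empirical matrix Ĵ (all four blocks at once, as a 4×4 matrix), evaluated at `θ`. -/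
def Jhat (δ : ℝ) (ε : ℕ → Ω → ℝ) (s0 : Ω → ℝ) (θ : Fin 4 → ℝ) (n : ℕ) (x : Ω) :
    Matrix (Fin 4) (Fin 4) ℝ :=
  Matrix.of fun i j => (4 / δ ^ 2) * (n : ℝ)⁻¹ * ∑ t ∈ Finset.Icc 1 n,
    ((sigmaD δ ε s0 θ t x) ^ 2)⁻¹ * gradSigmaD δ ε s0 θ t x i * gradSigmaD δ ε s0 θ t x j

/-- The universal estimator Î⁎ = Ĵ_{ϑϑ} − Ĵ_{ϑω} Ĵ_{ωω}⁻¹ Ĵ_{ωϑ}. -/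
def IhatStar (δ : ℝ) (ε : ℕ → Ω → ℝ) (s0 : Ω → ℝ) (θ : Fin 4 → ℝ) (n : ℕ) (x : Ω) :
    Matrix (Fin 3) (Fin 3) ℝ :=
  Matrix.of fun i j => Jhat δ ε s0 θ n x i.succ j.succ -
    Jhat δ ε s0 θ n x i.succ 0 * Jhat δ ε s0 θ n x 0 j.succ / Jhat δ ε s0 θ n x 0 0

/-- Estimator κ̂_η of Eη⁴ based on the rescaled residuals. -/
def kappaHat (δ : ℝ) (ε : ℕ → Ω → ℝ) (s0 : Ω → ℝ) (θhat : ℕ → Ω → Fin 4 → ℝ)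
    (n : ℕ) (x : Ω) : ℝ :=
  (n : ℝ)⁻¹ * ∑ t ∈ Finset.Icc 1 n, (etaT δ ε s0 (θhat n x) t x) ^ 4

/-- The standard normal cumulative distribution function. -/
def stdCDF (z : ℝ) : ℝ := (gaussianReal 0 1 (Set.Iic z)).toReal

/-- The symmetry test statistic T_n^S. -/
def TnS (δ : ℝ) (ε : ℕ → Ω → ℝ) (s0 : Ω → ℝ) (θhat : ℕ → Ω → Fin 4 → ℝ)
    (n : ℕ) (x : Ω) : ℝ :=
  Real.sqrt n * (θhat n x 1 - θhat n x 2) /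
    Real.sqrt ((kappaHat δ ε s0 θhat n x - 1) *
      (![1, -1, 0] ⬝ᵥ ((IhatStar δ ε s0 (θhat n x) n x)⁻¹ *ᵥ ![1, -1, 0])))

section AuxBasic

variable {Ω : Type*} [MeasurableSpace Ω]

lemma rpow_max_nonneg (δ u : ℝ) : 0 ≤ (max u 0) ^ δ :=
  Real.rpow_nonneg (le_max_right u 0) δ

lemma continuous_posPart_rpow {δ : ℝ} (hδ : 0 < δ) :
    Continuous fun u : ℝ => (max u 0) ^ δ := by
  rw [continuous_iff_continuousAt]
  intro u
  exact (Real.continuousAt_rpow_const _ _ (Or.inr hδ.le)).comp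
    ((continuous_id.max continuous_const).continuousAt)

lemma continuous_negPart_rpow {δ : ℝ} (hδ : 0 < δ) :
    Continuous fun u : ℝ => (max (-u) 0) ^ δ :=
  (continuous_posPart_rpow hδ).comp continuous_neg

lemma a0_continuous {δ a b c : ℝ} (hδ : 0 < δ) : Continuous (a0 δ a b c) := by
  unfold a0
  exact (((continuous_const.mul (continuous_posPart_rpow hδ)).add
    (continuous_const.mul (continuous_negPart_rpow hδ))).add continuous_const)

lemma a0_pos {δ a b c : ℝ} (ha : 0 ≤ a) (hb : 0 ≤ b) (hc : 0 < c) (u : ℝ) :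
    0 < a0 δ a b c u := by
  unfold a0
  have h1 := rpow_max_nonneg δ u
  have h2 := rpow_max_nonneg δ (-u)
  nlinarith

lemma tsum_eq_toReal_tsum_ofReal {f : ℕ → ℝ} (hf : ∀ i, 0 ≤ f i) :
    ∑' i, f i = (∑' i, ENNReal.ofReal (f i)).toReal := by
  by_cases h : Summable f
  · rw [← ENNReal.ofReal_tsum_of_nonneg hf h, ENNReal.toReal_ofReal (tsum_nonneg hf)]
  · rw [tsum_eq_zero_of_not_summable h]
    have htop : ∑' i, ENNReal.ofReal (f i) = ⊤ := by
      by_contra htop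
      refine h ?_
      have := ENNReal.summable_toReal htop
      refine this.congr fun i => ?_
      exact ENNReal.toReal_ofReal (hf i)
    simp [htop]

lemma exists_inSupport_of_isOpen {μ : Measure Ω} {Z : Ω → ℝ} (hZ : Measurable Z)
    {S : Set ℝ} (hS : IsOpen S) (h : 0 < μ (Z ⁻¹' S)) : ∃ v ∈ S, InSupport μ Z v := by
  by_contra hcon
  push_neg at hcon
  have h1 : ∀ v : S, ∃ e : ℝ, 0 < e ∧ μ (Z ⁻¹' Metric.ball (v : ℝ) e) = 0 := by
    rintro ⟨v, hv⟩
    have h2 := hcon v hv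
    unfold InSupport at h2
    push_neg at h2
    obtain ⟨e, he, h3⟩ := h2
    refine ⟨e, he, le_antisymm ?_ zero_le⟩
    refine le_trans (le_of_eq (congrArg _ ?_)) h3
    ext x
    simp [Metric.mem_ball, Real.dist_eq]
  choose e hepos hezero using h1
  have hcover : S ⊆ ⋃ v : S, Metric.ball (v : ℝ) (e v) := by
    intro v hv
    exact Set.mem_iUnion.2 ⟨⟨v, hv⟩, Metric.mem_ball_self (hepos ⟨v, hv⟩)⟩
  obtain ⟨T, hTc, hTU⟩ := TopologicalSpace.isOpen_iUnion_countable
    (fun v : S => Metric.ball (v : ℝ) (e v)) (fun v => Metric.isOpen_ball)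
  have hnull : μ (Z ⁻¹' ⋃ v ∈ T, Metric.ball (v : ℝ) (e v)) = 0 := by
    rw [Set.preimage_iUnion₂]
    exact (measure_biUnion_null_iff hTc).2 fun v _ => hezero v
  have : μ (Z ⁻¹' S) = 0 := by
    refine measure_mono_null ?_ hnull
    refine Set.preimage_mono ?_
    rw [hTU]
    exact hcover
  exact absurd this h.ne'

lemma InSupport.of_identDistrib {μ : Measure Ω} {Z Z' : Ω → ℝ}
    (h : IdentDistrib Z Z' μ μ) {v : ℝ} (hv : InSupport μ Z v) : InSupport μ Z' v := by
  intro e he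
  have hmeas : MeasurableSet (Metric.ball v e) := Metric.isOpen_ball.measurableSet
  have := h.measure_mem_eq hmeas
  have hset : ∀ W : Ω → ℝ, (W ⁻¹' Metric.ball v e) = {x | |W x - v| < e} := by
    intro W; ext x; simp [Metric.mem_ball, Real.dist_eq]
  rw [hset, hset] at this
  rw [← this]
  exact hv e he

lemma eq_on_inSupport {μ : Measure Ω} [IsProbabilityMeasure μ] {Z : Ω → ℝ}
    {A : Set ℝ} (hA : μ (Z ⁻¹' Aᶜ) = 0) {G : ℝ → ℝ} (hG : Continuous G) {c : ℝ}
    (hc : ∀ u ∈ A, G u = c) {v : ℝ} (hv : InSupport μ Z v) : G v = c := by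
  have key : ∀ n : ℕ, ∃ u, |u - v| < 1 / (n + 1) ∧ u ∈ A := by
    intro n
    have h1 : 0 < μ {x | |Z x - v| < 1 / (n + 1)} := hv _ (by positivity)
    have h2 : 0 < μ ({x | |Z x - v| < 1 / (n + 1)} \ Z ⁻¹' Aᶜ) := by
      rwa [measure_diff_null hA]
    obtain ⟨x, hx1, hx2⟩ := nonempty_of_measure_ne_zero h2.ne'
    exact ⟨Z x, hx1, by simpa using hx2⟩
  choose u hu1 hu2 using key
  have hlim : Filter.Tendsto u Filter.atTop (nhds v) := by
    rw [tendsto_iff_dist_tendsto_zero]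
    refine squeeze_zero (g := fun n : ℕ => 1 / (n + 1)) (fun n => dist_nonneg)
      (fun n => le_of_lt (by rw [Real.dist_eq]; exact hu1 n))
      tendsto_one_div_add_atTop_nhds_zero_nat
  have h1 : Filter.Tendsto (fun n => G (u n)) Filter.atTop (nhds (G v)) :=
    (hG.continuousAt).tendsto.comp hlim
  have h2 : (fun n => G (u n)) = fun _ => c := funext fun n => hc _ (hu2 n)
  rw [h2] at h1
  exact (tendsto_nhds_unique tendsto_const_nhds h1).symm

end AuxBasic

section AuxVterm

variable {Ω : Type*} [MeasurableSpace Ω]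

/-- The `j`-th term of the series defining `vProc`. -/
def vterm (δ a b c : ℝ) (η : ℤ → Ω → ℝ) (ϑ : Fin 3 → ℝ) (t : ℤ) (x : Ω) (j : ℕ) : ℝ :=
  ((ϑ 0 * (max (η (t - ((j : ℤ) + 1)) x) 0) ^ δ + ϑ 1 * (max (-(η (t - ((j : ℤ) + 1)) x)) 0) ^ δ)
      / a0 δ a b c (η (t - ((j : ℤ) + 1)) x)) *
    ∏ k ∈ Finset.range j, ϑ 2 / a0 δ a b c (η (t - ((k : ℤ) + 1)) x)

lemma vProc_eq_tsum (δ a b c : ℝ) (η : ℤ → Ω → ℝ) (ϑ : Fin 3 → ℝ) (t : ℤ) (x : Ω) :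
    vProc δ a b c η ϑ t x = ∑' j, vterm δ a b c η ϑ t x j := rfl

lemma vterm_nonneg {δ a b c : ℝ} (ha : 0 ≤ a) (hb : 0 ≤ b) (hc : 0 < c)
    {ϑ : Fin 3 → ℝ} (h0 : 0 ≤ ϑ 0) (h1 : 0 ≤ ϑ 1) (h2 : 0 ≤ ϑ 2)
    (η : ℤ → Ω → ℝ) (t : ℤ) (x : Ω) (j : ℕ) : 0 ≤ vterm δ a b c η ϑ t x j := by
  unfold vterm
  refine mul_nonneg (div_nonneg ?_ (a0_pos ha hb hc _).le) ?_
  · exact add_nonneg (mul_nonneg h0 (rpow_max_nonneg _ _)) (mul_nonneg h1 (rpow_max_nonneg _ _))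
  · exact Finset.prod_nonneg fun k _ => div_nonneg h2 (a0_pos ha hb hc _).le

lemma vterm_succ (δ a b c : ℝ) (η : ℤ → Ω → ℝ) (ϑ : Fin 3 → ℝ) (t : ℤ) (x : Ω) (j : ℕ) :
    vterm δ a b c η ϑ t x (j + 1)
      = (ϑ 2 / a0 δ a b c (η (t - 1) x)) * vterm δ a b c η ϑ (t - 1) x j := by
  unfold vterm
  rw [Finset.prod_range_succ']
  have h1 : ∀ k : ℕ, t - (((k : ℤ) + 1) + 1) = t - 1 - ((k : ℤ) + 1) := fun k => by ring
  have h2 : ((j + 1 : ℕ) : ℤ) + 1 = ((j : ℤ) + 1) + 1 := by push_cast; ring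
  rw [h2, h1]
  have h3 : ∀ k : ℕ, t - (((k + 1 : ℕ) : ℤ) + 1) = t - 1 - ((k : ℤ) + 1) := by
    intro k; push_cast; ring
  simp only [h3]
  have h4 : t - (((0 : ℕ) : ℤ) + 1) = t - 1 := by push_cast; ring
  rw [h4]
  ring

lemma vProc_rec {δ a b c : ℝ} (ha : 0 ≤ a) (hb : 0 ≤ b) (hc : 0 < c)
    {ϑ : Fin 3 → ℝ} (h2 : 0 < ϑ 2) (η : ℤ → Ω → ℝ) (t : ℤ) (x : Ω)
    (hx : Summable (vterm δ a b c η ϑ t x)) :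
    vProc δ a b c η ϑ t x
        = (ϑ 0 * (max (η (t - 1) x) 0) ^ δ + ϑ 1 * (max (-(η (t - 1) x)) 0) ^ δ)
            / a0 δ a b c (η (t - 1) x)
          + (ϑ 2 / a0 δ a b c (η (t - 1) x)) * vProc δ a b c η ϑ (t - 1) x
      ∧ Summable (vterm δ a b c η ϑ (t - 1) x) := by
  have hr : 0 < ϑ 2 / a0 δ a b c (η (t - 1) x) := div_pos h2 (a0_pos ha hb hc _)
  have hs1 : Summable fun j => vterm δ a b c η ϑ t x (j + 1) :=
    (summable_nat_add_iff 1).2 hx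
  have heq : (fun j => vterm δ a b c η ϑ t x (j + 1))
      = fun j => (ϑ 2 / a0 δ a b c (η (t - 1) x)) * vterm δ a b c η ϑ (t - 1) x j :=
    funext fun j => vterm_succ δ a b c η ϑ t x j
  rw [heq] at hs1
  have hs2 : Summable (vterm δ a b c η ϑ (t - 1) x) :=
    (summable_mul_left_iff hr.ne').1 hs1
  constructor
  · rw [vProc_eq_tsum, hx.tsum_eq_zero_add]
    have h0 : vterm δ a b c η ϑ t x 0
        = (ϑ 0 * (max (η (t - 1) x) 0) ^ δ + ϑ 1 * (max (-(η (t - 1) x)) 0) ^ δ)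
            / a0 δ a b c (η (t - 1) x) := by
      unfold vterm
      norm_num
    rw [h0, heq, tsum_mul_left, vProc_eq_tsum]
  · exact hs2

lemma vProc_measurable {δ a b c : ℝ} (hδ : 0 < δ) (ha : 0 ≤ a) (hb : 0 ≤ b) (hc : 0 < c)
    {ϑ : Fin 3 → ℝ} (h0 : 0 ≤ ϑ 0) (h1 : 0 ≤ ϑ 1) (h2 : 0 ≤ ϑ 2)
    {m' : MeasurableSpace Ω} (η : ℤ → Ω → ℝ) (t : ℤ)
    (hη : ∀ j : ℕ, Measurable[m'] (η (t - ((j : ℤ) + 1)))) :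
    Measurable[m'] (vProc δ a b c η ϑ t) := by
  have hF : ∀ s : ℤ, Measurable[m'] (η s) → Measurable[m'] (fun x =>
      (ϑ 0 * (max (η s x) 0) ^ δ + ϑ 1 * (max (-(η s x)) 0) ^ δ) / a0 δ a b c (η s x)) := by
    intro s hs
    have hcont : Continuous fun u : ℝ =>
        (ϑ 0 * (max u 0) ^ δ + ϑ 1 * (max (-u) 0) ^ δ) / a0 δ a b c u := by
      refine Continuous.div ?_ (a0_continuous hδ) fun u => (a0_pos ha hb hc u).ne'
      exact (continuous_const.mul (continuous_posPart_rpow hδ)).add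
        (continuous_const.mul (continuous_negPart_rpow hδ))
    exact hcont.measurable.comp hs
  have hG : ∀ s : ℤ, Measurable[m'] (η s) →
      Measurable[m'] (fun x => ϑ 2 / a0 δ a b c (η s x)) := by
    intro s hs
    have hcont : Continuous fun u : ℝ => ϑ 2 / a0 δ a b c u :=
      continuous_const.div (a0_continuous hδ) fun u => (a0_pos ha hb hc u).ne'
    exact hcont.measurable.comp hs
  have hterm : ∀ j : ℕ, Measurable[m'] (fun x => vterm δ a b c η ϑ t x j) := by
    intro j
    refine Measurable.mul (hF _ (hη j)) ?_
    refine Finset.measurable_prod _ fun k _ => hG _ (hη k)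
  have heq : vProc δ a b c η ϑ t
      = fun x => (∑' j, ENNReal.ofReal (vterm δ a b c η ϑ t x j)).toReal := by
    funext x
    rw [vProc_eq_tsum]
    exact tsum_eq_toReal_tsum_ofReal (vterm_nonneg ha hb hc h0 h1 h2 η t x)
  rw [heq]
  exact (Measurable.ennreal_tsum fun j =>
    ENNReal.measurable_ofReal.comp (hterm j)).ennreal_toReal

end AuxVterm

section AuxStep

variable {Ω : Type*} [MeasurableSpace Ω]

lemma slice_ae {μ : Measure Ω} [IsProbabilityMeasure μ] {X Y : Ω → ℝ}
    (hX : Measurable X) (hY : Measurable Y) (hindep : IndepFun X Y μ)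
    {φ : ℝ → ℝ → ℝ} (hφ : Measurable fun p : ℝ × ℝ => φ p.1 p.2)
    (h : ∀ᵐ x ∂μ, φ (X x) (Y x) = 0) :
    ∀ᵐ u ∂(μ.map X), ∀ᵐ w ∂(μ.map Y), φ u w = 0 := by
  have hXprob : IsProbabilityMeasure (μ.map X) := Measure.isProbabilityMeasure_map hX.aemeasurable
  have hYprob : IsProbabilityMeasure (μ.map Y) := Measure.isProbabilityMeasure_map hY.aemeasurable
  have hmap : μ.map (fun x => (X x, Y x)) = (μ.map X).prod (μ.map Y) :=
    (indepFun_iff_map_prod_eq_prod_map_map hX.aemeasurable hY.aemeasurable).1 hindep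
  have hsmeas : MeasurableSet {p : ℝ × ℝ | ¬ φ p.1 p.2 = 0} :=
    (hφ (measurableSet_singleton 0)).compl
  have h0 : μ.map (fun x => (X x, Y x)) {p : ℝ × ℝ | ¬ φ p.1 p.2 = 0} = 0 := by
    rw [Measure.map_apply (hX.prodMk hY) hsmeas]
    exact ae_iff.1 h
  rw [hmap, Measure.measure_prod_null hsmeas] at h0
  filter_upwards [h0] with u hu
  rw [ae_iff]
  exact hu

lemma step_key {μ : Measure Ω} [IsProbabilityMeasure μ] {X Y : Ω → ℝ}
    (hX : Measurable X) (hY : Measurable Y) (hindep : IndepFun X Y μ)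
    {g r : ℝ → ℝ} (hg : Continuous g) (hr : Continuous r) (hrpos : ∀ u, 0 < r u) {K : ℝ}
    (h : ∀ᵐ x ∂μ, g (X x) + r (X x) * Y x = K) :
    ∃ c : ℝ, (∀ᵐ x ∂μ, Y x = c) ∧ ∀ v, InSupport μ X v → g v + r v * c = K := by
  haveI : (ae μ).NeBot := ae_neBot.2 (IsProbabilityMeasure.ne_zero μ)
  set G : ℝ → ℝ := fun u => (K - g u) / r u with hGdef
  have hGcont : Continuous G :=
    (continuous_const.sub hg).div hr fun u => (hrpos u).ne'
  have hφm : Measurable fun p : ℝ × ℝ => g p.1 + r p.1 * p.2 - K := by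
    have : Continuous fun p : ℝ × ℝ => g p.1 + r p.1 * p.2 - K := by
      exact ((hg.comp continuous_fst).add
        ((hr.comp continuous_fst).mul continuous_snd)).sub continuous_const
    exact this.measurable
  have hs := slice_ae hX hY hindep (φ := fun u w => g u + r u * w - K) hφm
    (by filter_upwards [h] with x hx; rw [hx]; ring)
  have hA : ∀ᵐ u ∂(μ.map X), ∀ᵐ x ∂μ, Y x = G u := by
    filter_upwards [hs] with u hu
    have h1 : ∀ᵐ w ∂(μ.map Y), w = G u := by
      filter_upwards [hu] with w hw
      show w = (K - g u) / r u
      rw [eq_div_iff (hrpos u).ne']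
      linarith
    have h2 : MeasurableSet {w : ℝ | w = G u} := measurableSet_eq
    exact (ae_map_iff hY.aemeasurable h2).1 h1
  have hA' : ∀ᵐ x ∂μ, (∀ᵐ y ∂μ, Y y = G (X x)) := ae_of_ae_map hX.aemeasurable hA
  have hXprob : IsProbabilityMeasure (μ.map X) := Measure.isProbabilityMeasure_map hX.aemeasurable
  haveI : (ae (μ.map X)).NeBot := ae_neBot.2 (IsProbabilityMeasure.ne_zero _)
  obtain ⟨u0, hu0⟩ := hA.exists
  refine ⟨G u0, hu0, fun v hv => ?_⟩
  set A : Set ℝ := {u | ∀ᵐ y ∂μ, Y y = G u} with hAdef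
  have hAnull : μ (X ⁻¹' Aᶜ) = 0 := ae_iff.1 hA'
  have hconst : ∀ u ∈ A, G u = G u0 := by
    intro u hu
    have hu' : ∀ᵐ y ∂μ, Y y = G u := hu
    obtain ⟨y, hy1, hy2⟩ := (hu'.and hu0).exists
    rw [← hy1, hy2]
  have h5 : G v = G u0 := eq_on_inSupport hAnull hGcont hconst hv
  rw [← h5]
  show g v + r v * ((K - g v) / r v) = K
  have hne := (hrpos v).ne'
  field_simp
  ring

lemma keyLin {δ : ℝ} (hδ : 0 < δ) {p m q d1 d2 d3 : ℝ} (hp : 0 < p) (hm : m < 0)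
    (hqp : q ≠ p) (hqm : q ≠ m)
    (h1 : d1 * (max p 0) ^ δ + d2 * (max (-p) 0) ^ δ + d3 = 0)
    (h2 : d1 * (max m 0) ^ δ + d2 * (max (-m) 0) ^ δ + d3 = 0)
    (h3 : d1 * (max q 0) ^ δ + d2 * (max (-q) 0) ^ δ + d3 = 0) :
    d1 = 0 ∧ d2 = 0 ∧ d3 = 0 := by
  have hrne : ∀ {x y : ℝ}, 0 < x → 0 < y → x ≠ y → x ^ δ ≠ y ^ δ := by
    intro x y hx hy hxy
    rcases hxy.lt_or_gt with hlt | hlt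
    · exact ne_of_lt (Real.rpow_lt_rpow hx.le hlt hδ)
    · exact (ne_of_lt (Real.rpow_lt_rpow hy.le hlt hδ)).symm
  rw [max_eq_left hp.le, max_eq_right (by linarith : -p ≤ 0), Real.zero_rpow hδ.ne',
    mul_zero, add_zero] at h1
  rw [max_eq_right hm.le, max_eq_left (by linarith : (0:ℝ) ≤ -m), Real.zero_rpow hδ.ne',
    mul_zero, zero_add] at h2
  have hppos : 0 < p ^ δ := Real.rpow_pos_of_pos hp δ
  have hmpos : 0 < (-m) ^ δ := Real.rpow_pos_of_pos (by linarith) δ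
  rcases lt_trichotomy q 0 with hq | hq | hq
  · rw [max_eq_right hq.le, max_eq_left (by linarith : (0:ℝ) ≤ -q), Real.zero_rpow hδ.ne',
      mul_zero, zero_add] at h3
    have hne : (-q) ^ δ ≠ (-m) ^ δ :=
      hrne (by linarith) (by linarith) (by intro hh; exact hqm (by linarith))
    have hd2 : d2 = 0 := by
      have hz : d2 * ((-q) ^ δ - (-m) ^ δ) = 0 := by ring_nf; linarith
      rcases mul_eq_zero.1 hz with hh | hh
      · exact hh
      · exact absurd (by linarith : (-q) ^ δ = (-m) ^ δ) hne
    have hd3 : d3 = 0 := by rw [hd2] at h2; linarith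
    have hd1 : d1 = 0 := by
      rw [hd3] at h1
      rcases mul_eq_zero.1 (by linarith : d1 * p ^ δ = 0) with hh | hh
      · exact hh
      · exact absurd hh hppos.ne'
    exact ⟨hd1, hd2, hd3⟩
  · subst hq
    rw [max_self, neg_zero, max_self, Real.zero_rpow hδ.ne', mul_zero, mul_zero,
      zero_add, zero_add] at h3
    refine ⟨?_, ?_, h3⟩
    · rw [h3] at h1
      rcases mul_eq_zero.1 (by linarith : d1 * p ^ δ = 0) with hh | hh
      · exact hh
      · exact absurd hh hppos.ne'
    · rw [h3] at h2
      rcases mul_eq_zero.1 (by linarith : d2 * (-m) ^ δ = 0) with hh | hh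
      · exact hh
      · exact absurd hh hmpos.ne'
  · rw [max_eq_left hq.le, max_eq_right (by linarith : -q ≤ 0), Real.zero_rpow hδ.ne',
      mul_zero, add_zero] at h3
    have hne : q ^ δ ≠ p ^ δ := hrne hq hp hqp
    have hd1 : d1 = 0 := by
      have hz : d1 * (q ^ δ - p ^ δ) = 0 := by ring_nf; linarith
      rcases mul_eq_zero.1 hz with hh | hh
      · exact hh
      · exact absurd (by linarith : q ^ δ = p ^ δ) hne
    have hd3 : d3 = 0 := by rw [hd1] at h1; linarith
    have hd2 : d2 = 0 := by
      rw [hd3] at h2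
      rcases mul_eq_zero.1 (by linarith : d2 * (-m) ^ δ = 0) with hh | hh
      · exact hh
      · exact absurd hh hmpos.ne'
    exact ⟨hd1, hd2, hd3⟩

end AuxStep

/-- **Identifiability** (Lemma 7.2).  Under assumption A1, for `θ ∈ Θ₀`
(i.e. `θ ∈ Θ` with `β < e^{γ₀}`), one has `v_t(ϑ) = 1` a.s. if and only if
`ϑ = ϑ₀`. -/
theorem identifiability
    {Ω : Type*} [MeasurableSpace Ω] (μ : Measure Ω) [IsProbabilityMeasure μ]
    (δ : ℝ) (hδ : 0 < δ)
    (θ0 : Fin 4 → ℝ) (hθ0 : ParamPos θ0)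
    (η : ℤ → Ω → ℝ) (ε h : ℕ → Ω → ℝ)
    (hmod : Model μ δ θ0 η ε h)
    (hA1 : A1 μ (η 1))
    (Θ : Set (Fin 4 → ℝ)) (hΘc : IsCompact Θ)
    (hΘpos : ∀ θ ∈ Θ, ∀ i, 0 < θ i)
    (hθ0mem : θ0 ∈ Θ)
    (γ0 : ℝ) (hγint : Integrable (fun x => Real.log (a0 δ (θ0 1) (θ0 2) (θ0 3) (η 1 x))) μ)
    (hγdef : γ0 = ∫ x, Real.log (a0 δ (θ0 1) (θ0 2) (θ0 3) (η 1 x)) ∂μ)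
    (θ : Fin 4 → ℝ) (hθmem : θ ∈ Θ) (hθΘ0 : θ 3 < Real.exp γ0)
    (t : ℤ) :
    (∀ᵐ x ∂μ, vProc δ (θ0 1) (θ0 2) (θ0 3) η ![θ 1, θ 2, θ 3] t x = 1) ↔
      (θ 1 = θ0 1 ∧ θ 2 = θ0 2 ∧ θ 3 = θ0 3) := by
  have hα1 : 0 < θ0 1 := hΘpos θ0 hθ0mem 1
  have hα2 : 0 < θ0 2 := hΘpos θ0 hθ0mem 2
  have hβ0 : 0 < θ0 3 := hΘpos θ0 hθ0mem 3
  have hθ1 : 0 < θ 1 := hΘpos θ hθmem 1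
  have hθ2 : 0 < θ 2 := hΘpos θ hθmem 2
  have hθ3 : 0 < θ 3 := hΘpos θ hθmem 3
  set A : ℝ → ℝ := a0 δ (θ0 1) (θ0 2) (θ0 3) with hAdef
  have hApos : ∀ u, 0 < A u := a0_pos hα1.le hα2.le hβ0
  have hAcont : Continuous A := a0_continuous hδ
  have hAu : ∀ u, A u = θ0 1 * (max u 0) ^ δ + θ0 2 * (max (-u) 0) ^ δ + θ0 3 := fun u => rfl
  set ϑ : Fin 3 → ℝ := ![θ 1, θ 2, θ 3] with hϑdef
  have hϑ0 : ϑ 0 = θ 1 := rfl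
  have hϑ1 : ϑ 1 = θ 2 := rfl
  have hϑ2 : ϑ 2 = θ 3 := rfl
  -- support points
  obtain ⟨⟨x1, x2, x3, h12, h13, h23, hs1, hs2, hs3⟩, hge, hle⟩ := hA1
  have hZm : Measurable (η 1) := hmod.measη 1
  have hposms : 0 < μ (η 1 ⁻¹' Set.Ioi 0) := by
    have hmeas : MeasurableSet {x | η 1 x ≤ 0} := measurableSet_le hZm measurable_const
    have hcompl : (η 1) ⁻¹' Set.Ioi 0 = {x | η 1 x ≤ 0}ᶜ := by ext x; simp [not_le]
    rw [hcompl, measure_compl hmeas (measure_ne_top μ _), measure_univ]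
    exact tsub_pos_iff_lt.2 hle
  have hnegms : 0 < μ (η 1 ⁻¹' Set.Iio 0) := by
    have hmeas : MeasurableSet {x | 0 ≤ η 1 x} := measurableSet_le measurable_const hZm
    have hcompl : (η 1) ⁻¹' Set.Iio 0 = {x | 0 ≤ η 1 x}ᶜ := by ext x; simp [not_le]
    rw [hcompl, measure_compl hmeas (measure_ne_top μ _), measure_univ]
    exact tsub_pos_iff_lt.2 hge
  obtain ⟨p, hpmem, hpsup⟩ := exists_inSupport_of_isOpen hZm isOpen_Ioi hposms
  obtain ⟨m, hmmem, hmsup⟩ := exists_inSupport_of_isOpen hZm isOpen_Iio hnegms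
  have hp : 0 < p := hpmem
  have hm : m < 0 := hmmem
  have hqex : ∃ q, InSupport μ (η 1) q ∧ q ≠ p ∧ q ≠ m := by
    by_cases e1 : x1 ≠ p ∧ x1 ≠ m
    · exact ⟨x1, hs1, e1.1, e1.2⟩
    by_cases e2 : x2 ≠ p ∧ x2 ≠ m
    · exact ⟨x2, hs2, e2.1, e2.2⟩
    by_cases e3 : x3 ≠ p ∧ x3 ≠ m
    · exact ⟨x3, hs3, e3.1, e3.2⟩
    push_neg at e1 e2 e3
    exfalso
    have f1 : x1 = p ∨ x1 = m := by
      by_cases hh : x1 = p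
      · exact Or.inl hh
      · exact Or.inr (e1 hh)
    have f2 : x2 = p ∨ x2 = m := by
      by_cases hh : x2 = p
      · exact Or.inl hh
      · exact Or.inr (e2 hh)
    have f3 : x3 = p ∨ x3 = m := by
      by_cases hh : x3 = p
      · exact Or.inl hh
      · exact Or.inr (e3 hh)
    rcases f1 with hh1 | hh1 <;> rcases f2 with hh2 | hh2 <;> rcases f3 with hh3 | hh3 <;>
      simp_all
  obtain ⟨q, hqsup, hqp, hqm⟩ := hqex
  have hsupp : ∀ s : ℤ, ∀ v, InSupport μ (η 1) v → InSupport μ (η s) v := fun s v hv =>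
    hv.of_identDistrib (hmod.ident 1 s)
  -- measurability and independence
  have hϑ0le : 0 ≤ ϑ 0 := by rw [hϑ0]; exact hθ1.le
  have hϑ1le : 0 ≤ ϑ 1 := by rw [hϑ1]; exact hθ2.le
  have hϑ2le : 0 ≤ ϑ 2 := by rw [hϑ2]; exact hθ3.le
  have hϑ2pos : 0 < ϑ 2 := hθ3
  have hmeasv : ∀ s : ℤ, Measurable (vProc δ (θ0 1) (θ0 2) (θ0 3) η ϑ s) := fun s =>
    vProc_measurable hδ hα1.le hα2.le hβ0 hϑ0le hϑ1le hϑ2le η s fun j => hmod.measη _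
  have hindep : ∀ s : ℤ, IndepFun (η s) (vProc δ (θ0 1) (θ0 2) (θ0 3) η ϑ s) μ := by
    intro s
    have hle' : ∀ n : ℤ, MeasurableSpace.comap (η n) inferInstance ≤ _ := fun n =>
      (hmod.measη n).comap_le
    have hii : iIndep (fun i : ℤ => MeasurableSpace.comap (η i) inferInstance) μ :=
      (iIndepFun_iff_iIndep _ _ _).1 hmod.indep
    have hbig := indep_biSup_compl hle' hii {s}
    rw [IndepFun_iff_Indep]
    refine indep_of_indep_of_le_left (indep_of_indep_of_le_right hbig ?_) ?_
    · refine measurable_iff_comap_le.1 ?_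
      refine vProc_measurable hδ hα1.le hα2.le hβ0 hϑ0le hϑ1le hϑ2le η s fun j => ?_
      have hjmem : (s - ((j : ℤ) + 1)) ∈ ({s} : Set ℤ)ᶜ := by
        simp only [Set.mem_compl_iff, Set.mem_singleton_iff]
        omega
      exact Measurable.of_comap_le
        (le_biSup (fun n => MeasurableSpace.comap (η n) inferInstance) hjmem)
    · exact le_biSup (fun n => MeasurableSpace.comap (η n) inferInstance)
        (Set.mem_singleton s)
  set g : ℝ → ℝ := fun u => (θ 1 * (max u 0) ^ δ + θ 2 * (max (-u) 0) ^ δ) / A u with hgdef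
  set r : ℝ → ℝ := fun u => θ 3 / A u with hrdef
  have hgcont : Continuous g := by
    refine Continuous.div ?_ hAcont fun u => (hApos u).ne'
    exact (continuous_const.mul (continuous_posPart_rpow hδ)).add
      (continuous_const.mul (continuous_negPart_rpow hδ))
  have hrcont : Continuous r := continuous_const.div hAcont fun u => (hApos u).ne'
  have hrpos : ∀ u, 0 < r u := fun u => div_pos hθ3 (hApos u)
  constructor
  · intro hv
    have hsummt : ∀ᵐ x ∂μ, Summable (vterm δ (θ0 1) (θ0 2) (θ0 3) η ϑ t x) := by
      filter_upwards [hv] with x hx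
      by_contra hns
      rw [vProc_eq_tsum, tsum_eq_zero_of_not_summable hns] at hx
      norm_num at hx
    have hstep1 : ∀ᵐ x ∂μ, (g (η (t - 1) x) + r (η (t - 1) x)
        * vProc δ (θ0 1) (θ0 2) (θ0 3) η ϑ (t - 1) x = 1)
        ∧ Summable (vterm δ (θ0 1) (θ0 2) (θ0 3) η ϑ (t - 1) x) := by
      filter_upwards [hv, hsummt] with x hx1 hx2
      obtain ⟨heq, hsum⟩ := vProc_rec hα1.le hα2.le hβ0 hϑ2pos η t x hx2
      refine ⟨?_, hsum⟩
      rw [← hx1, heq]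
      simp only [hgdef, hrdef, hϑ0, hϑ1, hϑ2, ← hAdef]
    obtain ⟨c, hYc, hE1⟩ := step_key (hmod.measη (t - 1)) (hmeasv (t - 1)) (hindep (t - 1))
      hgcont hrcont hrpos (K := 1) (hstep1.mono fun x hx => hx.1)
    have hstep2 : ∀ᵐ x ∂μ, g (η (t - 1 - 1) x) + r (η (t - 1 - 1) x)
        * vProc δ (θ0 1) (θ0 2) (θ0 3) η ϑ (t - 1 - 1) x = c := by
      filter_upwards [hYc, hstep1.mono fun x hx => hx.2] with x hx1 hx2
      obtain ⟨heq, _⟩ := vProc_rec hα1.le hα2.le hβ0 hϑ2pos η (t - 1) x hx2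
      rw [← hx1, heq]
      simp only [hgdef, hrdef, hϑ0, hϑ1, hϑ2, ← hAdef]
    obtain ⟨c', hYc', hE2⟩ := step_key (hmod.measη (t - 1 - 1)) (hmeasv (t - 1 - 1))
      (hindep (t - 1 - 1)) hgcont hrcont hrpos (K := c) hstep2
    have hEq1 : ∀ v, InSupport μ (η 1) v →
        θ 1 * (max v 0) ^ δ + θ 2 * (max (-v) 0) ^ δ + θ 3 * c = A v := by
      intro v hv'
      have h1 := hE1 v (hsupp (t - 1) v hv')
      have hAne := (hApos v).ne'
      rw [hgdef, hrdef] at h1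
      field_simp at h1
      linarith
    have hEq2 : ∀ v, InSupport μ (η 1) v →
        θ 1 * (max v 0) ^ δ + θ 2 * (max (-v) 0) ^ δ + θ 3 * c' = c * A v := by
      intro v hv'
      have h1 := hE2 v (hsupp (t - 1 - 1) v hv')
      have hAne := (hApos v).ne'
      rw [hgdef, hrdef] at h1
      field_simp at h1
      linarith
    have hc1 : c = 1 := by
      by_contra hc
      have hc' : 1 - c ≠ 0 := sub_ne_zero_of_ne (Ne.symm hc)
      have hconst : ∀ v, InSupport μ (η 1) v → A v = (θ 3 * c - θ 3 * c') / (1 - c) := by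
        intro v hv'
        have h1 := hEq1 v hv'
        have h2 := hEq2 v hv'
        have h3 : θ 3 * c - θ 3 * c' = (1 - c) * A v := by linarith
        rw [h3, mul_div_cancel_left₀ _ hc']
      have ep := hconst p hpsup
      have em := hconst m hmsup
      have eq' := hconst q hqsup
      rw [hAu] at ep em eq'
      have hk := keyLin hδ hp hm hqp hqm
        (d1 := θ0 1) (d2 := θ0 2) (d3 := θ0 3 - (θ 3 * c - θ 3 * c') / (1 - c))
        (by linarith) (by linarith) (by linarith)
      exact absurd hk.1 hα1.ne'
    rw [hc1] at hEq1
    have ep := hEq1 p hpsup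
    have em := hEq1 m hmsup
    have eq' := hEq1 q hqsup
    rw [hAu] at ep em eq'
    have hk := keyLin hδ hp hm hqp hqm
      (d1 := θ 1 - θ0 1) (d2 := θ 2 - θ0 2) (d3 := θ 3 - θ0 3)
      (by ring_nf; ring_nf at ep; linarith) (by ring_nf; ring_nf at em; linarith)
      (by ring_nf; ring_nf at eq'; linarith)
    exact ⟨by linarith [hk.1], by linarith [hk.2.1], by linarith [hk.2.2]⟩
  · rintro ⟨h1, h2, h3⟩
    set f : ℝ → ℝ := fun u => Real.log (A u) with hfdef
    have hfm : Measurable f := Real.measurable_log.comp hAcont.measurable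
    set X : ℕ → Ω → ℝ := fun k x => f (η (t - ((k : ℤ) + 1)) x) with hXdef
    have hid : ∀ k : ℕ, IdentDistrib (X k) (fun x => f (η 1 x)) μ μ := fun k =>
      (IdentDistrib.comp (hmod.ident _ 1) hfm)
    have hint : Integrable (X 0) μ := by
      rw [(hid 0).integrable_iff]
      exact hγint
    have hpair : Pairwise (Function.onFun (IndepFun · · μ) X) := by
      intro i j hij
      have hne : (t - ((i : ℤ) + 1)) ≠ (t - ((j : ℤ) + 1)) := by
        intro hcon
        apply hij
        omega
      exact (hmod.indep.indepFun hne).comp hfm hfm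
    have hident0 : ∀ k, IdentDistrib (X k) (X 0) μ μ := fun k => (hid k).trans (hid 0).symm
    have hSLLN := strong_law_ae_real X hint hpair hident0
    have hmean : (∫ x, X 0 x ∂μ) = γ0 := by
      rw [hγdef]
      exact (hid 0).integral_eq
    rw [hmean] at hSLLN
    have hlog : Real.log (θ0 3) < γ0 := (Real.log_lt_iff_lt_exp hβ0).2 (by rw [← h3]; exact hθΘ0)
    filter_upwards [hSLLN] with x hx
    rw [hϑdef, h1, h2, h3]
    set R : ℕ → ℝ := fun k => θ0 3 / A (η (t - ((k : ℤ) + 1)) x) with hRdef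
    set P : ℕ → ℝ := fun n => ∏ k ∈ Finset.range n, R k with hPdef
    have hRpos : ∀ k, 0 < R k := fun k => div_pos hβ0 (hApos _)
    have hPpos : ∀ n, 0 < P n := fun n => Finset.prod_pos fun k _ => hRpos k
    have hϑ0' : (![θ0 1, θ0 2, θ0 3] : Fin 3 → ℝ) 0 = θ0 1 := rfl
    have hϑ1' : (![θ0 1, θ0 2, θ0 3] : Fin 3 → ℝ) 1 = θ0 2 := rfl
    have hϑ2' : (![θ0 1, θ0 2, θ0 3] : Fin 3 → ℝ) 2 = θ0 3 := rfl
    have hterm : ∀ j, vterm δ (θ0 1) (θ0 2) (θ0 3) η ![θ0 1, θ0 2, θ0 3] t x j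
        = P j - P (j + 1) := by
      intro j
      have hPj : P (j + 1) = P j * R j := by
        rw [hPdef]
        exact Finset.prod_range_succ R j
      rw [hPj]
      unfold vterm
      set u := η (t - ((j : ℤ) + 1)) x with hudef
      have hprod : (∏ k ∈ Finset.range j, (![θ0 1, θ0 2, θ0 3] : Fin 3 → ℝ) 2
          / a0 δ (θ0 1) (θ0 2) (θ0 3) (η (t - ((k : ℤ) + 1)) x)) = P j := rfl
      rw [hprod, hϑ0', hϑ1']
      have hR : R j = θ0 3 / A u := rfl
      have hAa : a0 δ (θ0 1) (θ0 2) (θ0 3) u = A u := rfl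
      rw [hR, hAa]
      have hAne := (hApos u).ne'
      field_simp
      rw [hAu u]
      ring
    have hpartial : ∀ n, ∑ j ∈ Finset.range n,
        vterm δ (θ0 1) (θ0 2) (θ0 3) η ![θ0 1, θ0 2, θ0 3] t x j = 1 - P n := by
      intro n
      rw [Finset.sum_congr rfl fun j _ => hterm j, Finset.sum_range_sub' P n]
      have hP0 : P 0 = 1 := by rw [hPdef]; simp
      rw [hP0]
    have hXlog : ∀ k, X k x = Real.log (A (η (t - ((k : ℤ) + 1)) x)) := fun k => rfl
    have hlogP : ∀ n, Real.log (P n)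
        = ∑ k ∈ Finset.range n, (Real.log (θ0 3) - X k x) := by
      intro n
      rw [hPdef, Real.log_prod fun k _ => (hRpos k).ne']
      refine Finset.sum_congr rfl fun k _ => ?_
      rw [hRdef]
      rw [Real.log_div hβ0.ne' (hApos _).ne']
    have h2' : Tendsto (fun n : ℕ => Real.log (P n) / n) atTop
        (𝓝 (Real.log (θ0 3) - γ0)) := by
      refine Tendsto.congr' ?_ (tendsto_const_nhds.sub hx)
      filter_upwards [eventually_ge_atTop 1] with n hn
      have hn0 : (n : ℝ) ≠ 0 := Nat.cast_ne_zero.2 (by omega)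
      rw [hlogP n, Finset.sum_sub_distrib, Finset.sum_const, Finset.card_range]
      field_simp
      ring
    have h3' : Tendsto (fun n : ℕ => Real.log (P n)) atTop atBot := by
      have h4 := Tendsto.atTop_mul_neg (by linarith : Real.log (θ0 3) - γ0 < 0)
        tendsto_natCast_atTop_atTop h2'
      refine Tendsto.congr' ?_ h4
      filter_upwards [eventually_ge_atTop 1] with n hn
      have hn0 : (n : ℝ) ≠ 0 := Nat.cast_ne_zero.2 (by omega)
      field_simp
    have hPlim : Tendsto P atTop (𝓝 0) := by
      have h5 : Tendsto (fun n => Real.exp (Real.log (P n))) atTop (𝓝 0) := by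
        have := Real.tendsto_exp_atBot.comp h3'
        exact this
      refine Tendsto.congr (fun n => ?_) h5
      exact Real.exp_log (hPpos n)
    rw [vProc_eq_tsum]
    have hnn : ∀ j, 0 ≤ vterm δ (θ0 1) (θ0 2) (θ0 3) η ![θ0 1, θ0 2, θ0 3] t x j := by
      refine vterm_nonneg hα1.le hα2.le hβ0 ?_ ?_ ?_ η t x
      · rw [hϑ0']; exact hα1.le
      · rw [hϑ1']; exact hα2.le
      · rw [hϑ2']; exact hβ0.le
    have hhs : HasSum (vterm δ (θ0 1) (θ0 2) (θ0 3) η ![θ0 1, θ0 2, θ0 3] t x) 1 := by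
      rw [hasSum_iff_tendsto_nat_of_nonneg hnn 1]
      have h6 : Tendsto (fun n => 1 - P n) atTop (𝓝 1) := by
        have := tendsto_const_nhds.sub hPlim (f := fun _ : ℕ => (1 : ℝ))
        simpa using this
      exact Tendsto.congr (fun n => (hpartial n).symm) h6
    exact hhs.tsum_eq

end NonstatGARCH
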